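/- Fix n ∈ ℕ and λ ∈ 𝒫. Suppose μ and ν are partitions, each obtained from λ by a finite sequence of unwrappings of rim hooks of size n, such that neither μ nor ν has any rim hook of size n (i.e. there is no node (a,b) ∈ [μ] with |𝔥_{a,b}(μ)| = n, and similarly for ν). Then μ = ν (this common partition is the n-core of λ). Moreover, for any s ∈ ℤ, this n-core equals Par(C), where C = ⋃_{c=0}^{n−1} {c + in : i ∈ ℤ, i < m_c} with m_c = |{i ≥ 0 : c + in ∈ β_s(λ)}| − |{i < 0 : c + in ∉ β_s(λ)}|. -/

import Mathlib

open scoped BigOperators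

/-- A partition: infinite weakly decreasing sequence of non-negative integers that is
eventually zero.  `parts i` denotes `λ_{i+1}` (zero-indexed). -/
structure YPartition where
  parts : ℕ → ℕ
  antitone' : ∀ i j : ℕ, i ≤ j → parts j ≤ parts i
  eventually_zero' : ∃ N : ℕ, ∀ k : ℕ, N ≤ k → parts k = 0

/-- `β_s(λ) = {λ_i + s - i : i ∈ ℕ}` (with `i ≥ 1`; `λ_{i+1} = parts i`). -/
def betaSet (lam : YPartition) (s : ℤ) : Set ℤ :=
  {x : ℤ | ∃ i : ℕ, x = (lam.parts i : ℤ) + s - (i + 1)}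

/-- A set of β-numbers. -/
def IsBetaSet (B : Set ℤ) : Prop :=
  (B ∩ {x : ℤ | 0 ≤ x}).Finite ∧ ({x : ℤ | x < 0} \ B).Finite

/-- `𝔰(B) = |ℕ₀ ∩ B| − |ℤ_{<0} \ B|`. -/
noncomputable def sInv (B : Set ℤ) : ℤ :=
  ((B ∩ {x : ℤ | 0 ≤ x}).ncard : ℤ) - (({x : ℤ | x < 0} \ B).ncard : ℤ)

/-- The Young diagram `[λ] = {(i,j) ∈ ℕ² : j ≤ λ_i}` with `i, j ≥ 1`. -/
def diagram (lam : YPartition) : Set (ℕ × ℕ) :=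
  {p : ℕ × ℕ | 1 ≤ p.1 ∧ 1 ≤ p.2 ∧ p.2 ≤ lam.parts (p.1 - 1)}

/-- `|λ|`, the number of nodes of `λ`. -/
noncomputable def wt (lam : YPartition) : ℕ := (diagram lam).ncard

/-- The `n`-residue of a node `(i,j)`, i.e. the class of `j - i` modulo `n`. -/
def res (n : ℕ) (p : ℕ × ℕ) : ZMod n := (((p.2 : ℤ) - (p.1 : ℤ)) : ZMod n)

def Removable (lam : YPartition) (p : ℕ × ℕ) : Prop :=
  p ∈ diagram lam ∧ ∃ mu : YPartition, diagram mu = diagram lam \ {p}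

def Addable (lam : YPartition) (p : ℕ × ℕ) : Prop :=
  p ∉ diagram lam ∧ ∃ mu : YPartition, diagram mu = diagram lam ∪ {p}

/-- The rim hook `𝔥_{a,b}(λ) = {(i,j) ∈ [λ] : i ≥ a, j ≥ max(b, λ_{i+1})}`. -/
def rimHook (lam : YPartition) (a b : ℕ) : Set (ℕ × ℕ) :=
  {p : ℕ × ℕ | p ∈ diagram lam ∧ a ≤ p.1 ∧ b ≤ p.2 ∧ lam.parts p.1 ≤ p.2}

/-- `μ` is obtained from `λ` by unwrapping a rim hook of size `c`. -/
def UnwrapHook (lam mu : YPartition) (c : ℕ) : Prop :=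
  ∃ a b : ℕ, (a, b) ∈ diagram lam ∧ diagram mu = diagram lam \ rimHook lam a b ∧
    (rimHook lam a b).ncard = c

/-- Strict lexicographic order on partitions: `λ > μ`. -/
def PartGT (lam mu : YPartition) : Prop :=
  ∃ r : ℕ, (∀ k : ℕ, k < r → lam.parts k = mu.parts k) ∧ mu.parts r < lam.parts r

def PartGE (lam mu : YPartition) : Prop := lam = mu ∨ PartGT lam mu

/-- Lexicographic comparison of integer sequences: `a > b`. -/
def SeqGT (a b : ℕ → ℤ) : Prop :=
  ∃ r : ℕ, (∀ k : ℕ, k < r → a k = b k) ∧ b r < a r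

/-- `B > B'` for sets of β-numbers, comparing decreasing enumerations lexicographically. -/
def BetaGT (B B' : Set ℤ) : Prop :=
  ∃ e e' : ℕ → ℤ, StrictAnti e ∧ StrictAnti e' ∧ Set.range e = B ∧ Set.range e' = B' ∧
    SeqGT e e'

def BetaGE (B B' : Set ℤ) : Prop := B = B' ∨ BetaGT B B'

/-- The relation `B →_n B'`. -/
def StepN (n : ℕ) (B B' : Set ℤ) : Prop :=
  ∃ a b : ℤ, ∃ i : ℕ, a ∈ B ∧ b ∈ B ∧ 1 ≤ i ∧ b + (i : ℤ) * (n : ℤ) < a ∧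
    a - (i : ℤ) * (n : ℤ) ∉ B ∧ b + (i : ℤ) * (n : ℤ) ∉ B ∧
    B' = (B \ {a, b}) ∪ {a - (i : ℤ) * (n : ℤ), b + (i : ℤ) * (n : ℤ)}

/-- The Jantzen order `λ ≥_{J_n} μ` on partitions. -/
def JantzenGE (n : ℕ) (lam mu : YPartition) : Prop :=
  ∃ s : ℤ, Relation.ReflTransGen (StepN n) (betaSet lam s) (betaSet mu s)

def JantzenGT (n : ℕ) (lam mu : YPartition) : Prop := JantzenGE n lam mu ∧ lam ≠ mu

/-- `n = n_1 + ⋯ + n_r`. -/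
def nTot {r : ℕ} (nn : Fin r → ℕ) : ℕ := ∑ k, nn k

/-- `σ_{j-1} = n_1 + ⋯ + n_{j-1}` (the sum of the entries before index `j`). -/
def sigBefore {r : ℕ} (nn : Fin r → ℕ) (j : Fin r) : ℕ :=
  ∑ k ∈ Finset.univ.filter (fun k : Fin r => (k : ℕ) < (j : ℕ)), nn k

/-- `X^𝐧_{i,j}(B) = {x − in − σ_{j−1} : x ∈ B ∩ ℤ^𝐧_{i,j}}`. -/
def Xset {r : ℕ} (nn : Fin r → ℕ) (B : Set ℤ) (i : ℤ) (j : Fin r) : Set ℤ :=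
  {y : ℤ | ∃ x ∈ B, (sigBefore nn j : ℤ) ≤ x - i * (nTot nn : ℤ) ∧
    x - i * (nTot nn : ℤ) < (sigBefore nn j : ℤ) + (nn j : ℤ) ∧
    y = x - i * (nTot nn : ℤ) - (sigBefore nn j : ℤ)}

/-- `𝚝^𝐧_B (i,j) = |X^𝐧_{i,j}(B)|`. -/
noncomputable def tfun {r : ℕ} (nn : Fin r → ℕ) (B : Set ℤ) : ℤ × Fin r → ℕ :=
  fun p => (Xset nn B p.1 p.2).ncard

/-- Membership in `T_𝐧`. -/
def memT {r : ℕ} (nn : Fin r → ℕ) (t : ℤ × Fin r → ℕ) : Prop :=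
  (∀ p : ℤ × Fin r, t p ≤ nn p.2) ∧
  {p : ℤ × Fin r | 0 ≤ p.1 ∧ t p ≠ 0}.Finite ∧
  {p : ℤ × Fin r | p.1 < 0 ∧ t p ≠ nn p.2}.Finite

/-- `𝔰(𝐭)`. -/
noncomputable def sT {r : ℕ} (nn : Fin r → ℕ) (t : ℤ × Fin r → ℕ) : ℤ :=
  (∑ᶠ p ∈ {p : ℤ × Fin r | 0 ≤ p.1}, (t p : ℤ)) -
  (∑ᶠ p ∈ {p : ℤ × Fin r | p.1 < 0}, ((nn p.2 : ℤ) - (t p : ℤ)))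

/-- `B_𝐭`, determined by `X^𝐧_{i,j}(B_𝐭) = {0, …, 𝐭(i,j) − 1}`. -/
def Bt {r : ℕ} (nn : Fin r → ℕ) (t : ℤ × Fin r → ℕ) : Set ℤ :=
  {x : ℤ | ∃ i : ℤ, ∃ j : Fin r,
    i * (nTot nn : ℤ) + (sigBefore nn j : ℤ) ≤ x ∧
    x < i * (nTot nn : ℤ) + (sigBefore nn j : ℤ) + (t (i, j) : ℤ)}

/-- One-runner version: `X^{(m)}_i(B)`. -/
def X1 (m : ℕ) (B : Set ℤ) (i : ℤ) : Set ℤ :=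
  {y : ℤ | ∃ x ∈ B, i * (m : ℤ) ≤ x ∧ x < (i + 1) * (m : ℤ) ∧ y = x - i * (m : ℤ)}

noncomputable def tfun1 (m : ℕ) (B : Set ℤ) : ℤ → ℕ := fun i => (X1 m B i).ncard

def memT1 (m : ℕ) (t : ℤ → ℕ) : Prop :=
  (∀ i : ℤ, t i ≤ m) ∧ {i : ℤ | 0 ≤ i ∧ t i ≠ 0}.Finite ∧ {i : ℤ | i < 0 ∧ t i ≠ m}.Finite

noncomputable def sT1 (m : ℕ) (t : ℤ → ℕ) : ℤ :=
  (∑ᶠ i ∈ {i : ℤ | 0 ≤ i}, (t i : ℤ)) - (∑ᶠ i ∈ {i : ℤ | i < 0}, ((m : ℤ) - (t i : ℤ)))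

/-- The strict partial order on `T_𝐧`. -/
def Tgt {r : ℕ} (nn : Fin r → ℕ) (t t' : ℤ × Fin r → ℕ) : Prop :=
  sT nn t = sT nn t' ∧
  ∃ i0 : ℤ, ∃ j0 : Fin r, t' (i0, j0) < t (i0, j0) ∧
    ∀ (i : ℤ) (j : Fin r), (i0 < i ∨ (i = i0 ∧ (j0 : ℕ) < (j : ℕ))) → t (i, j) = t' (i, j)

def Tge {r : ℕ} (nn : Fin r → ℕ) (t t' : ℤ × Fin r → ℕ) : Prop := t = t' ∨ Tgt nn t t'

/-- `m_c` from Statement 5. -/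
noncomputable def mcount (lam : YPartition) (s : ℤ) (n : ℕ) (c : ℕ) : ℤ :=
  ({i : ℤ | 0 ≤ i ∧ (c : ℤ) + i * (n : ℤ) ∈ betaSet lam s}.ncard : ℤ) -
  ({i : ℤ | i < 0 ∧ (c : ℤ) + i * (n : ℤ) ∉ betaSet lam s}.ncard : ℤ)

/-- `C = ⋃_{c<n} {c + in : i < m_c}` from Statement 5. -/
def coreSet (lam : YPartition) (s : ℤ) (n : ℕ) : Set ℤ :=
  {y : ℤ | ∃ c : ℕ, c < n ∧ ∃ i : ℤ, i < mcount lam s n c ∧ y = (c : ℤ) + i * (n : ℤ)}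

/-- The projection `π_𝐭` of the free module `𝔉` onto the span of `{s(λ) : λ ∈ 𝒫_𝐭}`. -/
noncomputable def proj {R : Type*} [Semiring R] {T : Type*} (ind : YPartition → T) (t : T)
    (v : YPartition →₀ R) : YPartition →₀ R := by
  classical
  exact Finsupp.onFinset v.support (fun mu => if ind mu = t then v mu else 0) <| by
    intro mu h
    rw [Finsupp.mem_support_iff]
    intro hv
    apply h
    simp [hv]
section Basics

variable (lam : YPartition) (s : ℤ)

/-- The decreasing enumeration of `betaSet lam s`. -/
def bfun (lam : YPartition) (s : ℤ) (i : ℕ) : ℤ := (lam.parts i : ℤ) + s - (i + 1)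

lemma bfun_strictAnti : StrictAnti (bfun lam s) := by
  apply strictAnti_nat_of_succ_lt
  intro k
  have h := lam.antitone' k (k + 1) (Nat.le_succ k)
  unfold bfun
  push_cast
  omega

lemma betaSet_eq_range : betaSet lam s = Set.range (bfun lam s) := by
  ext x
  constructor
  · rintro ⟨i, h⟩; exact ⟨i, h.symm⟩
  · rintro ⟨i, h⟩; exact ⟨i, h.symm⟩

lemma bfun_tail {N : ℕ} (hN : ∀ k, N ≤ k → lam.parts k = 0) {k : ℕ} (hk : N ≤ k) :
    bfun lam s k = s - 1 - k := by
  unfold bfun; rw [hN k hk]; push_cast; ring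

lemma YPartition.ext' {lam mu : YPartition} (h : ∀ i, lam.parts i = mu.parts i) : lam = mu := by
  cases lam; cases mu; simp only [YPartition.mk.injEq]; exact funext h

lemma strictAnti_range_eq {f g : ℕ → ℤ} (hf : StrictAnti f) (hg : StrictAnti g)
    (h : Set.range f = Set.range g) : f = g := by
  funext k
  induction k using Nat.strong_induction_on with
  | _ k ih =>
    have h1 : f k ∈ Set.range g := h ▸ Set.mem_range_self k
    have h2 : g k ∈ Set.range f := h.symm ▸ Set.mem_range_self k
    obtain ⟨m, hm⟩ := h1
    obtain ⟨m', hm'⟩ := h2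
    have hmk : k ≤ m := by
      by_contra hc
      push_neg at hc
      exact absurd (hf.injective ((ih m hc).trans hm)) (Nat.ne_of_lt hc)
    have hmk' : k ≤ m' := by
      by_contra hc
      push_neg at hc
      exact absurd (hg.injective ((ih m' hc).symm.trans hm')) (Nat.ne_of_lt hc)
    have h3 : g m ≤ g k := hg.antitone hmk
    have h4 : f m' ≤ f k := hf.antitone hmk'
    rw [hm] at h3
    rw [hm'] at h4
    omega

lemma betaSet_inj {lam mu : YPartition} {s : ℤ} (h : betaSet lam s = betaSet mu s) :
    lam = mu := by
  rw [betaSet_eq_range, betaSet_eq_range] at h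
  have := strictAnti_range_eq (bfun_strictAnti lam s) (bfun_strictAnti mu s) h
  apply YPartition.ext'
  intro i
  have := congrFun this i
  unfold bfun at this
  omega

lemma diagram_inj {lam mu : YPartition} (h : diagram lam = diagram mu) : lam = mu := by
  apply YPartition.ext'
  intro i
  have key : ∀ (p q : YPartition), diagram p = diagram q → p.parts i ≤ q.parts i := by
    intro p q hpq
    rcases Nat.eq_zero_or_pos (p.parts i) with h0 | h0
    · omega
    · have : (i + 1, p.parts i) ∈ diagram p := ⟨Nat.le_add_left 1 i, h0, by simp⟩
      rw [hpq] at this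
      simpa using this.2.2
  exact le_antisymm (key lam mu h) (key mu lam h.symm)

end Basics
section SInv

variable (lam : YPartition) (s : ℤ)

lemma betaSet_inter_nonneg (N : ℕ) (hN : ∀ k, N ≤ k → lam.parts k = 0) (hNs : s ≤ (N : ℤ)) :
    betaSet lam s ∩ {x : ℤ | 0 ≤ x} =
      ↑(((Finset.range N).filter (fun i => 0 ≤ bfun lam s i)).image (bfun lam s)) := by
  ext x
  simp only [Set.mem_inter_iff, Set.mem_setOf_eq, Finset.coe_image, Set.mem_image,
    Finset.mem_coe, Finset.mem_filter, Finset.mem_range, betaSet_eq_range, Set.mem_range]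
  constructor
  · rintro ⟨⟨i, hi⟩, hx⟩
    refine ⟨i, ⟨?_, hi ▸ hx⟩, hi⟩
    by_contra hc
    push_neg at hc
    rw [bfun_tail lam s hN hc] at hi
    omega
  · rintro ⟨i, ⟨_, h0⟩, hi⟩
    exact ⟨⟨i, hi⟩, hi ▸ h0⟩

lemma betaSet_neg_diff (N : ℕ) (hN : ∀ k, N ≤ k → lam.parts k = 0) (hNs : s ≤ (N : ℤ)) :
    {x : ℤ | x < 0} \ betaSet lam s =
      ↑(Finset.Ico (s - (N : ℤ)) 0 \
        ((Finset.range N).filter (fun i => bfun lam s i < 0)).image (bfun lam s)) := by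
  ext x
  simp only [Set.mem_diff, Set.mem_setOf_eq, Finset.coe_sdiff, Finset.coe_image,
    Set.mem_diff, Finset.mem_coe, Finset.mem_Ico, Set.mem_image, Finset.mem_filter,
    Finset.mem_range, betaSet_eq_range, Set.mem_range]
  constructor
  · rintro ⟨hx, hB⟩
    refine ⟨⟨?_, hx⟩, ?_⟩
    · by_contra hc
      push_neg at hc
      apply hB
      refine ⟨(s - 1 - x).toNat, ?_⟩
      have h1 : (N : ℤ) ≤ (s - 1 - x).toNat := by omega
      rw [bfun_tail lam s hN (by exact_mod_cast h1)]
      omega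
    · rintro ⟨i, _, hi⟩
      exact hB ⟨i, hi⟩
  · rintro ⟨⟨hx1, hx2⟩, hni⟩
    refine ⟨hx2, ?_⟩
    rintro ⟨i, hi⟩
    rcases Nat.lt_or_ge i N with h | h
    · exact hni ⟨i, ⟨h, hi ▸ hx2⟩, hi⟩
    · rw [bfun_tail lam s hN h] at hi
      have : (N : ℤ) ≤ (i : ℤ) := by exact_mod_cast h
      omega

lemma isBetaSet_betaSet : IsBetaSet (betaSet lam s) := by
  obtain ⟨N0, hN0⟩ := lam.eventually_zero'
  set N := N0 + s.toNat with hNdef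
  have hN : ∀ k, N ≤ k → lam.parts k = 0 := fun k hk => hN0 k (by omega)
  have hNs : s ≤ (N : ℤ) := by simp only [hNdef]; push_cast; omega
  constructor
  · rw [betaSet_inter_nonneg lam s N hN hNs]; exact Finset.finite_toSet _
  · rw [betaSet_neg_diff lam s N hN hNs]; exact Finset.finite_toSet _

lemma sInv_betaSet : sInv (betaSet lam s) = s := by
  obtain ⟨N0, hN0⟩ := lam.eventually_zero'
  set N := N0 + s.toNat with hNdef
  have hN : ∀ k, N ≤ k → lam.parts k = 0 := fun k hk => hN0 k (by omega)
  have hNs : s ≤ (N : ℤ) := by simp only [hNdef]; push_cast; omega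
  have hinj : Function.Injective (bfun lam s) := (bfun_strictAnti lam s).injective
  unfold sInv
  rw [betaSet_inter_nonneg lam s N hN hNs, betaSet_neg_diff lam s N hN hNs,
    Set.ncard_coe_finset, Set.ncard_coe_finset]
  have hsub : ((Finset.range N).filter (fun i => bfun lam s i < 0)).image (bfun lam s) ⊆
      Finset.Ico (s - (N : ℤ)) 0 := by
    intro x hx
    simp only [Finset.mem_image, Finset.mem_filter, Finset.mem_range] at hx
    obtain ⟨i, ⟨hiN, hi0⟩, hi⟩ := hx
    simp only [Finset.mem_Ico]
    have h1 : (i : ℤ) < (N : ℤ) := by exact_mod_cast hiN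
    have h2 : (0 : ℤ) ≤ (lam.parts i : ℤ) := by positivity
    unfold bfun at hi hi0
    omega
  rw [Finset.card_sdiff_of_subset hsub]
  rw [Finset.card_image_of_injective _ hinj, Finset.card_image_of_injective _ hinj]
  have hIco : (Finset.Ico (s - (N : ℤ)) 0).card = ((N : ℤ) - s).toNat := by
    rw [Int.card_Ico]; congr 1; ring
  rw [hIco]
  have hsplit := Finset.card_filter_add_card_filter_not
    (s := Finset.range N) (p := fun i => 0 ≤ bfun lam s i)
  have himg : (((Finset.range N).filter (fun i => bfun lam s i < 0))) =
      (((Finset.range N).filter (fun i => ¬ 0 ≤ bfun lam s i))) := by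
    apply Finset.filter_congr
    intro i _
    simp [not_le]
  have hle : (((Finset.range N).filter (fun i => bfun lam s i < 0))).card ≤
      ((N : ℤ) - s).toNat := by
    calc _ = (((Finset.range N).filter (fun i => bfun lam s i < 0)).image (bfun lam s)).card := by
              rw [Finset.card_image_of_injective _ hinj]
      _ ≤ _ := by rw [← hIco]; exact Finset.card_le_card hsub
  rw [Finset.card_range] at hsplit
  rw [himg] at hle ⊢
  set A := ((Finset.range N).filter (fun i => 0 ≤ bfun lam s i)).card with hA
  set Bc := ((Finset.range N).filter (fun i => ¬ 0 ≤ bfun lam s i)).card with hB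
  rw [Nat.cast_sub hle]
  have h2 : ((((N : ℤ) - s).toNat : ℤ)) = (N : ℤ) - s := Int.toNat_of_nonneg (by omega)
  rw [h2]
  have h1 : (A : ℤ) + (Bc : ℤ) = (N : ℤ) := by exact_mod_cast hsplit
  linarith
section RimCard

lemma rim_eq_coe (lam : YPartition) {a b e : ℕ} (ha : 1 ≤ a) (hb : 1 ≤ b)
    (hae : a ≤ e) (hbe : b ≤ lam.parts (e - 1)) (hPe : lam.parts e < b) :
    rimHook lam a b = ↑((Finset.Icc a e).biUnion
      (fun i => ({i} : Finset ℕ) ×ˢ Finset.Icc (max b (lam.parts i)) (lam.parts (i - 1)))) := by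
  ext p
  simp only [rimHook, diagram, Set.mem_setOf_eq, Finset.mem_coe, Finset.mem_biUnion,
    Finset.mem_Icc, Finset.mem_product, Finset.mem_singleton]
  constructor
  · rintro ⟨⟨h1, h2, h3⟩, h4, h5, h6⟩
    refine ⟨p.1, ⟨h4, ?_⟩, rfl, sup_le h5 h6, h3⟩
    by_contra hc
    push_neg at hc
    have : lam.parts (p.1 - 1) ≤ lam.parts e := lam.antitone' e (p.1 - 1) (by omega)
    omega
  · rintro ⟨i, ⟨hai, hie⟩, hp1, hp2⟩
    obtain ⟨hsup, hup⟩ := hp2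
    rw [sup_le_iff] at hsup
    obtain ⟨hbp, hPp⟩ := hsup
    subst hp1
    exact ⟨⟨by omega, by omega, hup⟩, hai, hbp, hPp⟩

lemma key_sum (P : ℕ → ℕ) (hP : ∀ i j : ℕ, i ≤ j → P j ≤ P i) {a b e : ℕ}
    (ha : 1 ≤ a) (hae : a ≤ e) (hbe : b ≤ P (e - 1)) (hPe : P e < b) :
    ∑ i ∈ Finset.Icc a e, ((P (i - 1) : ℤ) + 1 - max (b : ℤ) (P i)) =
      (P (a - 1) : ℤ) + e + 1 - a - b := by
  obtain ⟨d, rfl⟩ : ∃ d, e = a + d := ⟨e - a, by omega⟩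
  clear hae
  induction d generalizing a with
  | zero =>
    simp only [Nat.add_zero] at hPe ⊢
    rw [Finset.Icc_self, Finset.sum_singleton, max_eq_left (by exact_mod_cast hPe.le)]
    push_cast
    ring
  | succ d ih =>
    have hsplit : Finset.Icc a (a + (d + 1)) = insert a (Finset.Icc (a + 1) (a + 1 + d)) := by
      ext x
      simp only [Finset.mem_Icc, Finset.mem_insert]
      omega
    have hnotmem : a ∉ Finset.Icc (a + 1) (a + 1 + d) := by simp
    rw [hsplit, Finset.sum_insert hnotmem]
    have hbe' : b ≤ P (a + 1 + d - 1) := by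
      have : a + 1 + d - 1 = a + (d + 1) - 1 := by omega
      rw [this]; exact hbe
    have hPe' : P (a + 1 + d) < b := by
      have : a + 1 + d = a + (d + 1) := by omega
      rw [this]; exact hPe
    rw [ih (a := a + 1) (by omega) hbe' hPe']
    have hba : b ≤ P a := by
      have h1 : P (a + (d + 1) - 1) ≤ P a := hP a (a + (d + 1) - 1) (by omega)
      omega
    rw [max_eq_right (by exact_mod_cast hba)]
    push_cast
    ring

lemma rim_card (lam : YPartition) {a b e : ℕ} (ha : 1 ≤ a) (hb : 1 ≤ b)
    (hae : a ≤ e) (hbe : b ≤ lam.parts (e - 1)) (hPe : lam.parts e < b) :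
    ((rimHook lam a b).ncard : ℤ) = (lam.parts (a - 1) : ℤ) + e + 1 - a - b := by
  rw [rim_eq_coe lam ha hb hae hbe hPe, Set.ncard_coe_finset]
  rw [Finset.card_biUnion]
  · have hterm : ∀ i ∈ Finset.Icc a e,
        ((({i} : Finset ℕ) ×ˢ Finset.Icc (max b (lam.parts i)) (lam.parts (i - 1))).card : ℤ) =
          (lam.parts (i - 1) : ℤ) + 1 - max (b : ℤ) (lam.parts i) := by
      intro i hi
      simp only [Finset.mem_Icc] at hi
      have hb2 : b ≤ lam.parts (i - 1) :=
        le_trans hbe (lam.antitone' (i - 1) (e - 1) (by omega))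
      have hm : lam.parts i ≤ lam.parts (i - 1) := lam.antitone' (i - 1) i (by omega)
      rw [Finset.card_product, Finset.card_singleton, one_mul, Nat.card_Icc]
      push_cast [Nat.cast_max]
      omega
    rw [Nat.cast_sum, Finset.sum_congr rfl hterm]
    exact key_sum lam.parts lam.antitone' ha hae hbe hPe
  · intro i hi j hj hij
    rw [Function.onFun, Finset.disjoint_left]
    intro p hp hq
    simp only [Finset.mem_product, Finset.mem_singleton] at hp hq
    exact hij (hp.1.symm.trans hq.1)

end RimCard
section Forward

lemma parts_eq_of_row (mu : YPartition) (k q : ℕ)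
    (h : ∀ j : ℕ, 1 ≤ j → ((k + 1, j) ∈ diagram mu ↔ j ≤ q)) : mu.parts k = q := by
  have hd : ∀ j : ℕ, (k + 1, j) ∈ diagram mu ↔ (1 ≤ j ∧ j ≤ mu.parts k) := by
    intro j
    simp only [diagram, Set.mem_setOf_eq, Nat.add_sub_cancel]
    omega
  rcases Nat.eq_zero_or_pos (mu.parts k) with h0 | h0
  · rcases Nat.eq_zero_or_pos q with hq | hq
    · omega
    · have := (h q hq).2 le_rfl
      rw [hd] at this
      omega
  · have h1 := (h (mu.parts k) h0).1 ((hd _).2 ⟨h0, le_rfl⟩)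
    rcases Nat.eq_zero_or_pos q with hq | hq
    · omega
    · have h2 := (h q hq).2 le_rfl
      rw [hd] at h2
      omega

lemma mu_parts_formula (lam mu : YPartition) {a b : ℕ} (ha : 1 ≤ a) (hb : 1 ≤ b)
    (hd : diagram mu = diagram lam \ rimHook lam a b) (k : ℕ) :
    mu.parts k = if k + 1 < a then lam.parts k
      else min (lam.parts k) (max b (lam.parts (k + 1)) - 1) := by
  apply parts_eq_of_row
  intro j hj
  rw [hd]
  simp only [Set.mem_diff, rimHook, diagram, Set.mem_setOf_eq, Nat.add_sub_cancel]
  split_ifs with hcase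
  · omega
  · omega

lemma exists_e (lam : YPartition) {a b : ℕ} (ha : 1 ≤ a) (hb : 1 ≤ b)
    (hba : b ≤ lam.parts (a - 1)) :
    ∃ e, a ≤ e ∧ b ≤ lam.parts (e - 1) ∧ lam.parts e < b := by
  obtain ⟨N, hN⟩ := lam.eventually_zero'
  have haN : a ≤ N + a := by omega
  have h1 : a ≤ Nat.findGreatest (fun i => b ≤ lam.parts (i - 1)) (N + a) :=
    Nat.le_findGreatest haN hba
  have h2 : b ≤ lam.parts (Nat.findGreatest (fun i => b ≤ lam.parts (i - 1)) (N + a) - 1) :=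
    Nat.findGreatest_spec (P := fun i => b ≤ lam.parts (i - 1)) haN hba
  set e := Nat.findGreatest (fun i => b ≤ lam.parts (i - 1)) (N + a) with hedef
  refine ⟨e, h1, h2, ?_⟩
  by_contra hc
  push_neg at hc
  have he1 : e + 1 ≤ N + a := by
    by_contra h3
    push_neg at h3
    have : lam.parts e = 0 := hN e (by omega)
    omega
  have := Nat.findGreatest_is_greatest (show e < e + 1 by omega) he1
  simp only [Nat.add_sub_cancel] at this
  exact this hc

/-- The key forward lemma: unwrapping an `n`-rim-hook is a bead move on the abacus. -/
lemma beta_move_of_unwrap {lam mu : YPartition} {n : ℕ} (hu : UnwrapHook lam mu n) (s : ℤ) :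
    ∃ x : ℤ, x ∈ betaSet lam s ∧ x - n ∉ betaSet lam s ∧
      betaSet mu s = insert (x - (n : ℤ)) (betaSet lam s \ {x}) := by
  obtain ⟨a, b, habd, hd, hcard⟩ := hu
  obtain ⟨ha, hb, hba⟩ := habd
  obtain ⟨e, hae, hbe, hPe⟩ := exists_e lam ha hb hba
  have he1 : 1 ≤ e := le_trans ha hae
  have hncard : ((rimHook lam a b).ncard : ℤ) = (lam.parts (a - 1) : ℤ) + e + 1 - a - b :=
    rim_card lam ha hb hae hbe hPe
  rw [hcard] at hncard
  set x := bfun lam s (a - 1) with hxdef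
  have hxval : x = (lam.parts (a - 1) : ℤ) + s - a := by
    rw [hxdef]
    unfold bfun
    have : ((a - 1 : ℕ) : ℤ) + 1 = (a : ℤ) := by omega
    rw [this]
  have hxn : x - (n : ℤ) = s + (b : ℤ) - 1 - (e : ℤ) := by
    rw [hxval, hncard]; ring
  refine ⟨x, ⟨a - 1, by rw [hxval]; omega⟩, ?_, ?_⟩
  · -- x - n ∉ betaSet lam s
    rintro ⟨j, hj⟩
    rw [hxn] at hj
    rcases Nat.lt_or_ge j e with hje | hje
    · have h1 : bfun lam s (e - 1) ≤ bfun lam s j := (bfun_strictAnti lam s).antitone (by omega)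
      unfold bfun at h1
      have h2 : ((e - 1 : ℕ) : ℤ) + 1 = (e : ℤ) := by omega
      rw [h2] at h1
      omega
    · have h1 : bfun lam s j ≤ bfun lam s e := (bfun_strictAnti lam s).antitone hje
      unfold bfun at h1
      omega
  · -- set equality
    have hparts := mu_parts_formula lam mu ha hb hd
    have hbvals : ∀ k : ℕ,
        bfun mu s k = if k + 1 < a then bfun lam s k
          else if k + 1 < e then bfun lam s (k + 1)
          else if k + 1 = e then x - (n : ℤ)
          else bfun lam s k := by
      intro k
      rw [hxn]
      unfold bfun
      rw [hparts k]
      split_ifs with h1 h2 h3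
      · rfl
      · -- a ≤ k+1 < e : parts = lam.parts (k+1) - 1
        have hc1 : b ≤ lam.parts (k + 1) :=
          le_trans hbe (lam.antitone' (k + 1) (e - 1) (by omega))
        have hc2 : lam.parts (k + 1) ≤ lam.parts k := lam.antitone' k (k + 1) (by omega)
        have : min (lam.parts k) (max b (lam.parts (k + 1)) - 1) = lam.parts (k + 1) - 1 := by
          omega
        rw [this]
        push_cast [Nat.cast_sub (show 1 ≤ lam.parts (k+1) by omega)]
        ring
      · -- k+1 = e : parts = b - 1
        have hPk : lam.parts k = lam.parts (e - 1) := by rw [show k = e - 1 by omega]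
        have : min (lam.parts k) (max b (lam.parts (k + 1)) - 1) = b - 1 := by
          rw [hPk, show k + 1 = e from h3]
          omega
        rw [this]
        push_cast [Nat.cast_sub hb]
        have : ((k : ℤ) + 1) = (e : ℤ) := by exact_mod_cast congrArg (Nat.cast : ℕ → ℤ) h3
        omega
      · -- k+1 > e : parts = lam.parts k
        have hke : e ≤ k := by omega
        have hc1 : lam.parts k ≤ lam.parts e := lam.antitone' e k hke
        have hc2 : lam.parts (k + 1) ≤ lam.parts k := lam.antitone' k (k + 1) (by omega)
        have : min (lam.parts k) (max b (lam.parts (k + 1)) - 1) = lam.parts k := by omega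
        rw [this]
    -- now the range equality
    have hinj := (bfun_strictAnti lam s).injective
    rw [betaSet_eq_range, betaSet_eq_range]
    ext y
    simp only [Set.mem_range, Set.mem_insert_iff, Set.mem_diff, Set.mem_singleton_iff]
    constructor
    · rintro ⟨k, hk⟩
      rw [hbvals k] at hk
      split_ifs at hk with h1 h2 h3
      · right
        exact ⟨⟨k, hk⟩, fun hcon => by
          have : k = a - 1 := hinj (hk.trans (hcon.trans hxdef))
          omega⟩
      · right
        exact ⟨⟨k + 1, hk⟩, fun hcon => by
          have : k + 1 = a - 1 := hinj (hk.trans (hcon.trans hxdef))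
          omega⟩
      · left; exact hk.symm
      · right
        exact ⟨⟨k, hk⟩, fun hcon => by
          have : k = a - 1 := hinj (hk.trans (hcon.trans hxdef))
          omega⟩
    · rintro (rfl | ⟨⟨j, hj⟩, hne⟩)
      · refine ⟨e - 1, ?_⟩
        rw [hbvals (e - 1)]
        have h1 : e - 1 + 1 = e := by omega
        rw [h1]
        rw [if_neg (by omega), if_neg (by omega), if_pos rfl]
      · have hja : j ≠ a - 1 := fun hcon => hne (by rw [← hj, hcon, hxdef])
        rcases Nat.lt_or_ge j (a - 1) with hc | hc
        · exact ⟨j, by rw [hbvals j, if_pos (by omega)]; exact hj⟩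
        · rcases Nat.lt_or_ge j e with hc2 | hc2
          · -- a - 1 < j < e, use k = j - 1
            refine ⟨j - 1, ?_⟩
            rw [hbvals (j - 1)]
            have h1 : j - 1 + 1 = j := by omega
            rw [h1, if_neg (by omega), if_pos hc2]
            exact hj
          · exact ⟨j, by
              rw [hbvals j, if_neg (by omega), if_neg (by omega), if_neg (by omega)]
              exact hj⟩

end Forward
section Converse

lemma hook_of_beta {mu : YPartition} {n : ℕ} (hn : 0 < n) (s : ℤ) {x : ℤ}
    (hx : x ∈ betaSet mu s) (hxn : x - (n : ℤ) ∉ betaSet mu s) :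
    ∃ a b : ℕ, (a, b) ∈ diagram mu ∧ (rimHook mu a b).ncard = n := by
  rw [betaSet_eq_range] at hx hxn
  obtain ⟨k0, hk0⟩ := hx
  have hex : ∃ m : ℕ, bfun mu s m ≤ x - n := by
    obtain ⟨N, hN⟩ := mu.eventually_zero'
    refine ⟨N + (s - 1 - x + n).toNat, ?_⟩
    rw [bfun_tail mu s hN (by omega)]
    push_cast
    omega
  classical
  set m := Nat.find hex with hmdef
  have hm : bfun mu s m ≤ x - n := Nat.find_spec hex
  have hmlt : ∀ j : ℕ, j < m → x - n < bfun mu s j := by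
    intro j hj
    have := Nat.find_min hex hj
    omega
  have hn1 : (1 : ℤ) ≤ (n : ℤ) := by exact_mod_cast hn
  have hmk0 : k0 + 1 ≤ m := by
    rcases Nat.lt_or_ge k0 m with h | h
    · omega
    · exfalso
      have hle : bfun mu s k0 ≤ bfun mu s m := (bfun_strictAnti mu s).antitone h
      rw [hk0] at hle
      omega
  have hmne : bfun mu s m ≠ x - n := fun hc => hxn ⟨m, hc⟩
  have hmlt' : bfun mu s m < x - n := lt_of_le_of_ne hm hmne
  -- definitions
  set a := k0 + 1 with hadef
  set bz : ℤ := x - n - s + m + 1 with hbzdef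
  have hPm : (mu.parts m : ℤ) < bz := by
    unfold bfun at hmlt'
    push_cast at hmlt'
    omega
  have hbz1 : 1 ≤ bz := by
    have : (0 : ℤ) ≤ (mu.parts m : ℤ) := by positivity
    omega
  set b := bz.toNat with hbdef
  have hbcast : (b : ℤ) = bz := Int.toNat_of_nonneg (by omega)
  have hm1 : 1 ≤ m := by omega
  have hbem : (b : ℤ) ≤ (mu.parts (m - 1) : ℤ) := by
    have h1 := hmlt (m - 1) (by omega)
    unfold bfun at h1
    have h2 : ((m - 1 : ℕ) : ℤ) + 1 = (m : ℤ) := by omega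
    rw [h2] at h1
    omega
  have hbe : b ≤ mu.parts (m - 1) := by exact_mod_cast hbem
  have hPe : mu.parts m < b := by exact_mod_cast hbcast ▸ hPm
  have hk0v : (mu.parts k0 : ℤ) = x - s + k0 + 1 := by
    unfold bfun at hk0
    omega
  have hba : b ≤ mu.parts (a - 1) := by
    have hanti : (mu.parts (m - 1) : ℤ) ≤ (mu.parts k0 : ℤ) := by
      exact_mod_cast mu.antitone' k0 (m - 1) (by omega)
    have hmk : (m : ℤ) ≤ (k0 : ℤ) + n := by
      have h1 := hmlt (m - 1) (by omega)
      unfold bfun at h1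
      have h2 : ((m - 1 : ℕ) : ℤ) + 1 = (m : ℤ) := by omega
      rw [h2] at h1
      omega
    have : (b : ℤ) ≤ (mu.parts (a - 1) : ℤ) := by
      simp only [hadef, Nat.add_sub_cancel]
      omega
    exact_mod_cast this
  have ha1 : 1 ≤ a := by omega
  have hb1 : 1 ≤ b := by omega
  have hae : a ≤ m := by omega
  refine ⟨a, b, ⟨ha1, hb1, hba⟩, ?_⟩
  have hcard := rim_card mu ha1 hb1 hae hbe hPe
  have : ((rimHook mu a b).ncard : ℤ) = (n : ℤ) := by
    rw [hcard]
    simp only [hadef, Nat.add_sub_cancel]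
    push_cast
    omega
  exact_mod_cast this

end Converse
section Abacus

/-- Set-level version of `mcount`. -/
noncomputable def msetc (n : ℕ) (B : Set ℤ) (c : ℕ) : ℤ :=
  ({i : ℤ | 0 ≤ i ∧ (c : ℤ) + i * (n : ℤ) ∈ B}.ncard : ℤ) -
  ({i : ℤ | i < 0 ∧ (c : ℤ) + i * (n : ℤ) ∉ B}.ncard : ℤ)

lemma mcount_eq_msetc (lam : YPartition) (s : ℤ) (n c : ℕ) :
    mcount lam s n c = msetc n (betaSet lam s) c := rfl

lemma runner_inj {n : ℕ} (hn : 0 < n) (c : ℤ) :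
    Function.Injective (fun i : ℤ => c + i * (n : ℤ)) := by
  intro i j h
  simp only at h
  have hn' : (0 : ℤ) < (n : ℤ) := by exact_mod_cast hn
  have : i * (n : ℤ) = j * (n : ℤ) := by omega
  exact mul_right_cancel₀ (by omega) this

lemma finA {B : Set ℤ} (hB : IsBetaSet B) {n : ℕ} (hn : 0 < n) (c : ℕ) :
    {i : ℤ | 0 ≤ i ∧ (c : ℤ) + i * (n : ℤ) ∈ B}.Finite := by
  apply Set.Finite.subset
    (Set.Finite.preimage ((runner_inj hn (c : ℤ)).injOn) hB.1)
  intro i hi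
  obtain ⟨hi0, hiB⟩ := hi
  have h1 : (0 : ℤ) ≤ i * (n : ℤ) := mul_nonneg hi0 (by positivity)
  have h2 : (0 : ℤ) ≤ (c : ℤ) := by positivity
  exact ⟨hiB, by simp only [Set.mem_setOf_eq]; omega⟩

lemma finD {B : Set ℤ} (hB : IsBetaSet B) {n : ℕ} (hn : 0 < n) {c : ℕ} (hc : c < n) :
    {i : ℤ | i < 0 ∧ (c : ℤ) + i * (n : ℤ) ∉ B}.Finite := by
  apply Set.Finite.subset
    (Set.Finite.preimage ((runner_inj hn (c : ℤ)).injOn) hB.2)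
  intro i hi
  obtain ⟨hi0, hiB⟩ := hi
  have h1 : i * (n : ℤ) ≤ (-1) * (n : ℤ) :=
    mul_le_mul_of_nonneg_right (by omega) (by positivity)
  have hcn : (c : ℤ) < (n : ℤ) := by exact_mod_cast hc
  exact ⟨by simp only [Set.mem_setOf_eq]; omega, hiB⟩

lemma msetc_move {B : Set ℤ} {n : ℕ} (hn : 0 < n) (hB : IsBetaSet B) {x : ℤ}
    (hx : x ∈ B) (hxn : x - (n : ℤ) ∉ B) {c : ℕ} (hc : c < n) :
    msetc n (insert (x - (n : ℤ)) (B \ {x})) c = msetc n B c := by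
  set B' := insert (x - (n : ℤ)) (B \ {x}) with hB'
  have hmem : ∀ i : ℤ, ((c : ℤ) + i * n ∈ B') ↔
      ((c : ℤ) + i * n = x - n ∨ ((c : ℤ) + i * n ∈ B ∧ (c : ℤ) + i * n ≠ x)) := by
    intro i
    simp [hB', Set.mem_insert_iff, Set.mem_diff]
  have hAfin := finA hB hn c
  have hDfin := finD hB hn hc
  by_cases hdvd : ∃ i0 : ℤ, (c : ℤ) + i0 * n = x
  · obtain ⟨i0, hi0⟩ := hdvd
    have heqx : ∀ i : ℤ, ((c : ℤ) + i * n = x ↔ i = i0) :=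
      fun i => ⟨fun h => runner_inj hn (c : ℤ) (h.trans hi0.symm), fun h => h ▸ hi0⟩
    have hi0n : (c : ℤ) + (i0 - 1) * n = x - n := by rw [sub_mul, one_mul]; omega
    have heqxn : ∀ i : ℤ, ((c : ℤ) + i * n = x - n ↔ i = i0 - 1) :=
      fun i => ⟨fun h => runner_inj hn (c : ℤ) (h.trans hi0n.symm), fun h => h ▸ hi0n⟩
    have hxB : (c : ℤ) + i0 * n ∈ B := hi0 ▸ hx
    have hxnB : (c : ℤ) + (i0 - 1) * n ∉ B := hi0n ▸ hxn
    have hmem' : ∀ i : ℤ, ((c : ℤ) + i * n ∈ B') ↔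
        (i = i0 - 1 ∨ ((c : ℤ) + i * n ∈ B ∧ i ≠ i0)) := by
      intro i
      rw [hmem i, heqxn i]
      constructor
      · rintro (h | ⟨h1, h2⟩)
        · exact Or.inl h
        · exact Or.inr ⟨h1, fun hcon => h2 ((heqx i).2 hcon)⟩
      · rintro (h | ⟨h1, h2⟩)
        · exact Or.inl h
        · exact Or.inr ⟨h1, fun hcon => h2 ((heqx i).1 hcon)⟩
    unfold msetc
    rcases lt_trichotomy i0 0 with hi0s | hi0s | hi0s
    · -- i0 < 0 : nonneg side unchanged, negative side exchanged
      have hA : {i : ℤ | 0 ≤ i ∧ (c : ℤ) + i * (n : ℤ) ∈ B'} =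
          {i : ℤ | 0 ≤ i ∧ (c : ℤ) + i * (n : ℤ) ∈ B} := by
        ext i
        simp only [Set.mem_setOf_eq, hmem' i]
        constructor
        · rintro ⟨h0, (h | ⟨h1, _⟩)⟩
          · omega
          · exact ⟨h0, h1⟩
        · rintro ⟨h0, h1⟩
          exact ⟨h0, Or.inr ⟨h1, by omega⟩⟩
      have hD : {i : ℤ | i < 0 ∧ (c : ℤ) + i * (n : ℤ) ∉ B'} =
          insert i0 ({i : ℤ | i < 0 ∧ (c : ℤ) + i * (n : ℤ) ∉ B} \ {i0 - 1}) := by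
        ext i
        simp only [Set.mem_setOf_eq, Set.mem_insert_iff, Set.mem_diff,
          Set.mem_singleton_iff, hmem' i]
        constructor
        · rintro ⟨hlt, hnm⟩
          push_neg at hnm
          obtain ⟨hne1, himp⟩ := hnm
          by_cases hii : i = i0
          · exact Or.inl hii
          · exact Or.inr ⟨⟨hlt, fun hmB => hii (himp hmB)⟩, hne1⟩
        · rintro (rfl | ⟨⟨hlt, hnm⟩, hne⟩)
          · refine ⟨hi0s, ?_⟩
            rintro (h | ⟨hmB, hii⟩)
            · omega
            · exact hii rfl
          · refine ⟨hlt, ?_⟩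
            rintro (h | ⟨hmB, _⟩)
            · exact hne h
            · exact hnm hmB
      have hnotmemD : i0 ∉ {i : ℤ | i < 0 ∧ (c : ℤ) + i * (n : ℤ) ∉ B} :=
        fun hcon => hcon.2 hxB
      have hmemD : i0 - 1 ∈ {i : ℤ | i < 0 ∧ (c : ℤ) + i * (n : ℤ) ∉ B} := ⟨by omega, hxnB⟩
      rw [hA, hD, Set.ncard_exchange hnotmemD hmemD]
    · -- i0 = 0
      subst hi0s
      have hA : {i : ℤ | 0 ≤ i ∧ (c : ℤ) + i * (n : ℤ) ∈ B'} =
          {i : ℤ | 0 ≤ i ∧ (c : ℤ) + i * (n : ℤ) ∈ B} \ {0} := by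
        ext i
        simp only [Set.mem_setOf_eq, Set.mem_diff, Set.mem_singleton_iff, hmem' i]
        constructor
        · rintro ⟨h0, (h | ⟨h1, h2⟩)⟩
          · omega
          · exact ⟨⟨h0, h1⟩, h2⟩
        · rintro ⟨⟨h0, h1⟩, h2⟩
          exact ⟨h0, Or.inr ⟨h1, h2⟩⟩
      have hD : {i : ℤ | i < 0 ∧ (c : ℤ) + i * (n : ℤ) ∉ B'} =
          {i : ℤ | i < 0 ∧ (c : ℤ) + i * (n : ℤ) ∉ B} \ {(-1 : ℤ)} := by
        ext i
        simp only [Set.mem_setOf_eq, Set.mem_diff, Set.mem_singleton_iff, hmem' i]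
        constructor
        · rintro ⟨hlt, hnm⟩
          push_neg at hnm
          obtain ⟨hne1, himp⟩ := hnm
          exact ⟨⟨hlt, fun hmB => by have := himp hmB; omega⟩, by omega⟩
        · rintro ⟨⟨hlt, hnm⟩, hne⟩
          refine ⟨hlt, ?_⟩
          rintro (h | ⟨hmB, _⟩)
          · omega
          · exact hnm hmB
      have h0A : (0 : ℤ) ∈ {i : ℤ | 0 ≤ i ∧ (c : ℤ) + i * (n : ℤ) ∈ B} := ⟨le_rfl, hxB⟩
      have hm1D : (-1 : ℤ) ∈ {i : ℤ | i < 0 ∧ (c : ℤ) + i * (n : ℤ) ∉ B} := by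
        refine ⟨by omega, ?_⟩
        have : (0 : ℤ) - 1 = -1 := by omega
        rw [← this]
        exact hxnB
      have hApos : 0 < {i : ℤ | 0 ≤ i ∧ (c : ℤ) + i * (n : ℤ) ∈ B}.ncard :=
        (Set.ncard_pos hAfin).2 ⟨0, h0A⟩
      have hDpos : 0 < {i : ℤ | i < 0 ∧ (c : ℤ) + i * (n : ℤ) ∉ B}.ncard :=
        (Set.ncard_pos hDfin).2 ⟨-1, hm1D⟩
      rw [hA, hD, Set.ncard_diff_singleton_of_mem h0A,
        Set.ncard_diff_singleton_of_mem hm1D]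
      omega
    · -- i0 > 0 : nonneg side exchanged, negative side unchanged
      have hA : {i : ℤ | 0 ≤ i ∧ (c : ℤ) + i * (n : ℤ) ∈ B'} =
          insert (i0 - 1) ({i : ℤ | 0 ≤ i ∧ (c : ℤ) + i * (n : ℤ) ∈ B} \ {i0}) := by
        ext i
        simp only [Set.mem_setOf_eq, Set.mem_insert_iff, Set.mem_diff,
          Set.mem_singleton_iff, hmem' i]
        constructor
        · rintro ⟨h0, (h | ⟨h1, h2⟩)⟩
          · exact Or.inl h
          · exact Or.inr ⟨⟨h0, h1⟩, h2⟩
        · rintro (rfl | ⟨⟨h0, h1⟩, h2⟩)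
          · exact ⟨by omega, Or.inl rfl⟩
          · exact ⟨h0, Or.inr ⟨h1, h2⟩⟩
      have hD : {i : ℤ | i < 0 ∧ (c : ℤ) + i * (n : ℤ) ∉ B'} =
          {i : ℤ | i < 0 ∧ (c : ℤ) + i * (n : ℤ) ∉ B} := by
        ext i
        simp only [Set.mem_setOf_eq, hmem' i]
        constructor
        · rintro ⟨hlt, hnm⟩
          push_neg at hnm
          obtain ⟨hne1, himp⟩ := hnm
          exact ⟨hlt, fun hmB => by have := himp hmB; omega⟩
        · rintro ⟨hlt, hnm⟩
          refine ⟨hlt, ?_⟩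
          rintro (h | ⟨hmB, _⟩)
          · omega
          · exact hnm hmB
      have hnotmemA : i0 - 1 ∉ {i : ℤ | 0 ≤ i ∧ (c : ℤ) + i * (n : ℤ) ∈ B} :=
        fun hcon => hxnB hcon.2
      have hmemA : i0 ∈ {i : ℤ | 0 ≤ i ∧ (c : ℤ) + i * (n : ℤ) ∈ B} := ⟨by omega, hxB⟩
      rw [hA, hD, Set.ncard_exchange hnotmemA hmemA]
  · -- no index on this runner hits x : everything unchanged
    have h1 : ∀ i : ℤ, (c : ℤ) + i * n ≠ x := fun i hi => hdvd ⟨i, hi⟩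
    have h2 : ∀ i : ℤ, (c : ℤ) + i * n ≠ x - n := by
      intro i hi
      exact hdvd ⟨i + 1, by rw [add_mul, one_mul]; omega⟩
    have hiff : ∀ i : ℤ, ((c : ℤ) + i * n ∈ B') ↔ ((c : ℤ) + i * n ∈ B) := by
      intro i
      rw [hmem i]
      constructor
      · rintro (h | ⟨h, _⟩)
        · exact absurd h (h2 i)
        · exact h
      · intro h
        exact Or.inr ⟨h, h1 i⟩
    unfold msetc
    congr 3
    · ext i; simp only [Set.mem_setOf_eq, hiff i]
    · ext i; simp only [Set.mem_setOf_eq, hiff i]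

end Abacus
section Terminal

lemma terminal_eq_core {B : Set ℤ} {n : ℕ} (hn : 0 < n) (hB : IsBetaSet B)
    (hdown : ∀ x ∈ B, x - (n : ℤ) ∈ B) :
    B = {y : ℤ | ∃ c : ℕ, c < n ∧ ∃ i : ℤ, i < msetc n B c ∧ y = (c : ℤ) + i * (n : ℤ)} := by
  classical
  have hn' : (0 : ℤ) < (n : ℤ) := by exact_mod_cast hn
  have key : ∀ c : ℕ, c < n → ∀ i : ℤ, ((c : ℤ) + i * n ∈ B ↔ i < msetc n B c) := by
    intro c hc
    have hcn : (c : ℤ) < (n : ℤ) := by exact_mod_cast hc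
    have hc0 : (0 : ℤ) ≤ (c : ℤ) := by positivity
    have hdc : ∀ i : ℤ, (c : ℤ) + i * n ∈ B → (c : ℤ) + (i - 1) * n ∈ B := by
      intro i hi
      have h1 := hdown _ hi
      have heq : (c : ℤ) + i * n - n = (c : ℤ) + (i - 1) * n := by ring
      rwa [heq] at h1
    have hdc' : ∀ (k : ℕ) (i : ℤ), (c : ℤ) + i * n ∈ B → (c : ℤ) + (i - k) * n ∈ B := by
      intro k
      induction k with
      | zero => intro i hi; simpa using hi
      | succ k ih =>
        intro i hi
        have h1 := hdc (i - k) (ih i hi)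
        have heq : i - (k : ℤ) - 1 = i - ((k : ℕ)+ 1 : ℕ) := by push_cast; ring
        rwa [heq] at h1
    have hmono : ∀ i j : ℤ, j ≤ i → (c : ℤ) + i * n ∈ B → (c : ℤ) + j * n ∈ B := by
      intro i j hji hi
      have h1 := hdc' (i - j).toNat i hi
      have heq : i - ((i - j).toNat : ℤ) = j := by omega
      rwa [heq] at h1
    obtain ⟨K, hK⟩ := hB.1.bddAbove
    obtain ⟨K', hK'⟩ := hB.2.bddBelow
    have hub : ∀ i : ℤ, max K 0 < i → (c : ℤ) + i * n ∉ B := by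
      intro i hi hmem
      have h1 : i * 1 ≤ i * n := by
        apply mul_le_mul_of_nonneg_left (by omega) (by omega)
      have h2 : (c : ℤ) + i * n ≤ K := hK ⟨hmem, by simp only [Set.mem_setOf_eq]; omega⟩
      omega
    have hlb : ∀ i : ℤ, i < min K' 0 - n → (c : ℤ) + i * n ∈ B := by
      intro i hi
      by_contra hmem
      have h1 : i * n ≤ i * 1 := by
        apply mul_le_mul_of_nonpos_left (by omega) (by omega)
      have h2 : i * n ≤ (-1) * n := mul_le_mul_of_nonneg_right (by omega) (by omega)
      have h3 : K' ≤ (c : ℤ) + i * n := hK' ⟨by simp only [Set.mem_setOf_eq]; omega, hmem⟩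
      omega
    obtain ⟨m, hm1, hm2⟩ := Int.exists_least_of_bdd
      (P := fun i => (c : ℤ) + i * n ∉ B)
      ⟨min K' 0 - n, fun z hz => by by_contra hcon; exact hz (hlb z (by omega))⟩
      ⟨max K 0 + 1, hub _ (by omega)⟩
    have hmem_iff : ∀ i : ℤ, ((c : ℤ) + i * n ∈ B ↔ i < m) := by
      intro i
      constructor
      · intro hi
        by_contra hcon
        push_neg at hcon
        exact hm1 (hmono i m hcon hi)
      · intro hi
        by_contra hcon
        have := hm2 i hcon
        omega
    have hmval : msetc n B c = m := by
      unfold msetc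
      have hA : {i : ℤ | 0 ≤ i ∧ (c : ℤ) + i * (n : ℤ) ∈ B} = ↑(Finset.Ico (0 : ℤ) m) := by
        ext i
        simp only [Set.mem_setOf_eq, Finset.coe_Ico, Set.mem_Ico, hmem_iff i]
      have hD : {i : ℤ | i < 0 ∧ (c : ℤ) + i * (n : ℤ) ∉ B} = ↑(Finset.Ico m (0 : ℤ)) := by
        ext i
        simp only [Set.mem_setOf_eq, Finset.coe_Ico, Set.mem_Ico, hmem_iff i]
        omega
      rw [hA, hD, Set.ncard_coe_finset, Set.ncard_coe_finset, Int.card_Ico, Int.card_Ico]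
      omega
    intro i
    rw [hmval]
    exact hmem_iff i
  ext y
  simp only [Set.mem_setOf_eq]
  constructor
  · intro hy
    have hcnn : (0 : ℤ) ≤ y % n := Int.emod_nonneg y (by omega)
    have hclt : y % n < n := Int.emod_lt_of_pos y hn'
    have hdiv := Int.emod_add_mul_ediv y (n : ℤ)
    set c := (y % n).toNat with hcdef
    have hcc : (c : ℤ) = y % n := Int.toNat_of_nonneg hcnn
    have hcn : c < n := by omega
    have hyeq : y = (c : ℤ) + (y / n) * n := by
      rw [hcc, mul_comm]
      linarith [hdiv]
    exact ⟨c, hcn, y / n, (key c hcn (y / n)).1 (by rwa [← hyeq]), hyeq⟩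
  · rintro ⟨c, hc, i, hi, rfl⟩
    exact (key c hc i).2 hi

lemma msetc_chain {n : ℕ} (hn : 0 < n) {lam rho : YPartition}
    (h : Relation.ReflTransGen (fun x y : YPartition => UnwrapHook x y n) lam rho)
    (s : ℤ) {c : ℕ} (hc : c < n) :
    msetc n (betaSet rho s) c = msetc n (betaSet lam s) c := by
  induction h with
  | refl => rfl
  | tail hch hstep ih =>
    obtain ⟨x, hx, hxn, heq⟩ := beta_move_of_unwrap hstep s
    rw [heq, msetc_move hn (isBetaSet_betaSet _ s) hx hxn hc, ih]

end Terminal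

/-- The `n`-core is well-defined: any two partitions obtained from `λ` by
successively unwrapping rim hooks of size `n` until none remain are equal; moreover for any
`s`, this `n`-core is `Par(C)` for the explicit set `C = coreSet λ s n`. -/
theorem statement5 (n : ℕ) (hn : 0 < n) (lam mu nu : YPartition)
    (hmu : Relation.ReflTransGen (fun x y : YPartition => UnwrapHook x y n) lam mu)
    (hnu : Relation.ReflTransGen (fun x y : YPartition => UnwrapHook x y n) lam nu)
    (hmu' : ¬ ∃ a b : ℕ, (a, b) ∈ diagram mu ∧ (rimHook mu a b).ncard = n)
    (hnu' : ¬ ∃ a b : ℕ, (a, b) ∈ diagram nu ∧ (rimHook nu a b).ncard = n) :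
    mu = nu ∧ ∀ s : ℤ, betaSet mu (sInv (coreSet lam s n)) = coreSet lam s n := by
  have main : ∀ rho : YPartition,
      Relation.ReflTransGen (fun x y : YPartition => UnwrapHook x y n) lam rho →
      (¬ ∃ a b : ℕ, (a, b) ∈ diagram rho ∧ (rimHook rho a b).ncard = n) →
      ∀ s : ℤ, betaSet rho s = coreSet lam s n := by
    intro rho hchain hno s
    have hdown : ∀ x ∈ betaSet rho s, x - (n : ℤ) ∈ betaSet rho s := by
      intro x hx
      by_contra hc
      exact hno (hook_of_beta hn s hx hc)
    rw [terminal_eq_core hn (isBetaSet_betaSet rho s) hdown]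
    unfold coreSet
    ext y
    simp only [Set.mem_setOf_eq]
    constructor
    · rintro ⟨c, hc, i, hi, rfl⟩
      refine ⟨c, hc, i, ?_, rfl⟩
      rw [mcount_eq_msetc, ← msetc_chain hn hchain s hc]
      exact hi
    · rintro ⟨c, hc, i, hi, rfl⟩
      refine ⟨c, hc, i, ?_, rfl⟩
      rw [mcount_eq_msetc, ← msetc_chain hn hchain s hc] at hi
      exact hi
  refine ⟨betaSet_inj ((main mu hmu hmu' 0).trans (main nu hnu hnu' 0).symm), ?_⟩
  intro s
  have h1 := main mu hmu hmu' s
  rw [← h1, sInv_betaSet]
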